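/- Every eigenvalue λ of the truncated Fourier operator F_{[-a,a]} corresponding to an even eigenfunction is real and lies in [−1,1], and every eigenvalue corresponding to an odd eigenfunction is purely imaginary and lies in [−i,i]; consequently every eigenvalue lies in the cross [−1,1] ∪ [−i,i] ⊂ ℂ. -/

import Mathlib

open Complex MeasureTheory intervalIntegral

/-- The truncated Fourier operator `F_{[-a,a]}`. -/
noncomputable def truncFourier (a : ℝ) (x : ℝ → ℂ) : ℝ → ℂ :=
  fun t => (1 / Real.sqrt (2 * Real.pi)) *
    ∫ τ in (-a)..a, Complex.exp (Complex.I * t * τ) * x τ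



open Set AddCircle
open scoped ENNReal

-- continuity of the kernel integrand in (t, τ)
lemma tf_kernel_cont (x : ℝ → ℂ) (hx : Continuous x) :
    Continuous (Function.uncurry fun t τ : ℝ => Complex.exp (Complex.I * t * τ) * x τ) := by
  apply continuousOn_univ.mp
  have : Continuous (fun p : ℝ × ℝ => Complex.exp (Complex.I * p.1 * p.2) * x p.2) := by fun_prop
  exact (this.congr (by intro p; rfl)).continuousOn

lemma tf_integrand_cont (x : ℝ → ℂ) (hx : Continuous x) (t : ℝ) :
    Continuous (fun τ : ℝ => Complex.exp (Complex.I * t * τ) * x τ) := by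
  fun_prop

-- continuity of truncFourier
lemma truncFourier_continuous (a : ℝ) (x : ℝ → ℂ) (hx : Continuous x) :
    Continuous (truncFourier a x) := by
  unfold truncFourier
  apply Continuous.mul continuous_const
  exact intervalIntegral.continuous_parametric_intervalIntegral_of_continuous'
    (f := fun (t : ℝ) (τ : ℝ) => Complex.exp (Complex.I * t * τ) * x τ) (tf_kernel_cont x hx) _ _

-- positivity of the L² norm
lemma N_pos (a : ℝ) (ha : 0 < a) (x : ℝ → ℂ) (hx : Continuous x)
    (hx0 : ∃ t ∈ Set.Icc (-a) a, x t ≠ 0) :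
    0 < ∫ t in (-a)..a, ‖x t‖ ^ 2 := by
  obtain ⟨t0, ht0, hxt0⟩ := hx0
  have hU : IsOpen {t : ℝ | x t ≠ 0} := isOpen_ne_fun hx continuous_const
  have hlt : -a < a := by linarith
  have hcl : t0 ∈ closure (Set.Ioo (-a) a) := by
    rw [closure_Ioo hlt.ne]; exact ht0
  obtain ⟨t1, ht1U, ht1⟩ := mem_closure_iff.mp hcl _ hU hxt0
  rw [intervalIntegral.integral_of_le hlt.le]
  refine (setIntegral_pos_iff_support_of_nonneg_ae ?_ ?_).2 ?_
  · exact Filter.Eventually.of_forall fun t => by positivity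
  · exact (hx.norm.pow 2).integrableOn_Ioc
  · have hsub : ({t : ℝ | x t ≠ 0} ∩ Set.Ioo (-a) a) ⊆
        (Function.support (fun t => ‖x t‖ ^ 2) ∩ Set.Ioc (-a) a) := by
      rintro t ⟨h1, h2⟩
      exact ⟨by simp [Function.mem_support]; exact h1, Set.Ioo_subset_Ioc_self h2⟩
    refine lt_of_lt_of_le ?_ (measure_mono hsub)
    exact (hU.inter isOpen_Ioo).measure_pos volume ⟨t1, ht1U, ht1⟩

-- Fubini for continuous functions over [-a,a]²
lemma swap_int (a : ℝ) (ha : 0 < a) (f : ℝ → ℝ → ℂ)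
    (hf : Continuous (fun p : ℝ × ℝ => f p.1 p.2)) :
    ∫ t in (-a)..a, ∫ τ in (-a)..a, f t τ = ∫ τ in (-a)..a, ∫ t in (-a)..a, f t τ := by
  have hle : -a ≤ a := by linarith
  have hint : Integrable (Function.uncurry f)
      ((volume.restrict (Ioc (-a) a)).prod (volume.restrict (Ioc (-a) a))) := by
    rw [Measure.prod_restrict]
    have : IntegrableOn (Function.uncurry f) (Icc (-a) a ×ˢ Icc (-a) a)
        (volume.prod volume) := by
      rw [← Measure.volume_eq_prod]
      exact (hf.continuousOn (s := Icc (-a) a ×ˢ Icc (-a) a)).integrableOn_compact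
        (isCompact_Icc.prod isCompact_Icc)
    rw [← Measure.volume_eq_prod]
    exact this.mono_set (Set.prod_mono Set.Ioc_subset_Icc_self Set.Ioc_subset_Icc_self)
  simp only [intervalIntegral.integral_of_le hle]
  exact MeasureTheory.integral_integral_swap hint

-- conj of an interval integral
lemma conj_intervalIntegral (a b : ℝ) (f : ℝ → ℂ) :
    (starRingEnd ℂ) (∫ t in a..b, f t) = ∫ t in a..b, (starRingEnd ℂ) (f t) := by
  simp only [intervalIntegral, map_sub, ← integral_conj]

lemma eigen_conj (a : ℝ) (ha : 0 < a) (x : ℝ → ℂ) (lam : ℂ) (hx : Continuous x)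
    (hx0 : ∃ t ∈ Set.Icc (-a) a, x t ≠ 0)
    (heig : ∀ t ∈ Set.Icc (-a) a, truncFourier a x t = lam * x t)
    (e : ℝ) (he : (e:ℂ) * e = 1) (hsym : ∀ t, x (-t) = (e:ℂ) * x t) :
    (starRingEnd ℂ) lam = e * lam := by
  have hle : -a ≤ a := by linarith
  set cC : ℂ := 1 / (Real.sqrt (2 * Real.pi) : ℂ) with hcC
  set Y : ℝ → ℂ := fun t => ∫ τ in (-a)..a, Complex.exp (Complex.I * t * τ) * x τ with hY
  set N : ℝ := ∫ t in (-a)..a, ‖x t‖ ^ 2 with hN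
  set S : ℂ := ∫ t in (-a)..a, (starRingEnd ℂ) (x t) * truncFourier a x t with hS
  set D : ℂ := ∫ t in (-a)..a, ∫ τ in (-a)..a,
      Complex.exp (-(Complex.I * t * τ)) * x τ * (starRingEnd ℂ) (x t) with hD
  have htf : ∀ t : ℝ, truncFourier a x t = cC * Y t := fun t => rfl
  -- Step 1 : S = lam * N
  have h1 : S = lam * (N : ℂ) := by
    have : S = ∫ t in (-a)..a, lam * (((‖x t‖ ^ 2 : ℝ)) : ℂ) := by
      apply intervalIntegral.integral_congr
      intro t ht
      rw [Set.uIcc_of_le hle] at ht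
      simp only [heig t ht]
      rw [show (starRingEnd ℂ) (x t) * (lam * x t) = lam * ((starRingEnd ℂ) (x t) * x t) by ring]
      congr 1
      rw [mul_comm, Complex.mul_conj']
      norm_cast
    rw [this, intervalIntegral.integral_const_mul]
    congr 1
    exact intervalIntegral.integral_ofReal
  -- Step 2 : parity substitution
  have h2 : ∀ t : ℝ, Y t = (e : ℂ) * ∫ τ in (-a)..a, Complex.exp (-(Complex.I * t * τ)) * x τ := by
    intro t
    set f : ℝ → ℂ := fun u => Complex.exp (-(Complex.I * t * u)) * x (-u) with hf
    have key : (∫ τ in (-a)..a, f (-τ)) = ∫ u in (-a)..a, f u := by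
      have := intervalIntegral.integral_comp_neg (a := -a) (b := a) (f := f)
      simpa using this
    have ha1 : Y t = ∫ τ in (-a)..a, f (-τ) := by
      apply intervalIntegral.integral_congr
      intro τ _
      simp only [hf, neg_neg]
      congr 2
      push_cast
      ring
    rw [ha1, key]
    have : ∀ u : ℝ, f u = (e:ℂ) * (Complex.exp (-(Complex.I * t * u)) * x u) := by
      intro u; simp only [hf]; rw [hsym u]; ring
    simp only [this]
    rw [intervalIntegral.integral_const_mul]
  -- Step 3 : S = e * cC * D
  have h3 : S = (e : ℂ) * cC * D := by
    rw [hS, hD, ← intervalIntegral.integral_const_mul]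
    apply intervalIntegral.integral_congr
    intro t _
    simp only []
    rw [htf t, h2 t]
    rw [show (starRingEnd ℂ) (x t) * (cC * ((e:ℂ) *
        ∫ τ in (-a)..a, Complex.exp (-(Complex.I * t * τ)) * x τ)) = (e:ℂ) * cC *
        ((∫ τ in (-a)..a, Complex.exp (-(Complex.I * t * τ)) * x τ) * (starRingEnd ℂ) (x t))
        by ring, ← intervalIntegral.integral_mul_const]
  -- Step 4 : conj S = cC * D'
  have hconjexp : ∀ t τ : ℝ, (starRingEnd ℂ) (Complex.exp (Complex.I * t * τ))
      = Complex.exp (-(Complex.I * t * τ)) := by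
    intro t τ
    rw [← Complex.exp_conj]
    congr 1
    simp only [map_mul, Complex.conj_I, Complex.conj_ofReal]
    ring
  have hconjc : (starRingEnd ℂ) cC = cC := by
    rw [hcC, map_div₀, map_one]
    rw [Complex.conj_ofReal]
  have h4 : (starRingEnd ℂ) S = cC * ∫ t in (-a)..a, ∫ τ in (-a)..a,
      Complex.exp (-(Complex.I * t * τ)) * (starRingEnd ℂ) (x τ) * x t := by
    rw [hS, conj_intervalIntegral, ← intervalIntegral.integral_const_mul]
    apply intervalIntegral.integral_congr
    intro t _
    simp only []
    rw [map_mul, htf t, map_mul, hconjc]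
    have hYc : (starRingEnd ℂ) (Y t) = ∫ τ in (-a)..a,
        Complex.exp (-(Complex.I * t * τ)) * (starRingEnd ℂ) (x τ) := by
      rw [hY, conj_intervalIntegral]
      apply intervalIntegral.integral_congr
      intro τ _
      simp only [map_mul, hconjexp]
    rw [hYc, Complex.conj_conj]
    rw [show x t * (cC * ∫ τ in (-a)..a,
        Complex.exp (-(Complex.I * t * τ)) * (starRingEnd ℂ) (x τ)) = cC *
        ((∫ τ in (-a)..a, Complex.exp (-(Complex.I * t * τ)) * (starRingEnd ℂ) (x τ)) * x t)
        by ring, ← intervalIntegral.integral_mul_const]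
  -- Step 5 : Fubini + renaming : conj S = cC * D
  have h5 : (starRingEnd ℂ) S = cC * D := by
    rw [h4]
    congr 1
    have hcont : Continuous (fun p : ℝ × ℝ =>
        Complex.exp (-(Complex.I * p.1 * p.2)) * (starRingEnd ℂ) (x p.2) * x p.1) := by
      apply Continuous.mul
      · apply Continuous.mul
        · fun_prop
        · exact Complex.continuous_conj.comp (hx.comp continuous_snd)
      · exact hx.comp continuous_fst
    rw [swap_int a ha _ hcont]
    rw [hD]
    apply intervalIntegral.integral_congr
    intro u _
    apply intervalIntegral.integral_congr
    intro v _
    simp only []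
    rw [show Complex.I * (v:ℂ) * (u:ℂ) = Complex.I * (u:ℂ) * (v:ℂ) by ring]
    ring
  -- Conclusion
  have hNpos : 0 < N := N_pos a ha x hx hx0
  have hNne : (N : ℂ) ≠ 0 := by
    simp only [ne_eq, Complex.ofReal_eq_zero]
    exact ne_of_gt hNpos
  have hDS : (starRingEnd ℂ) S = (e:ℂ) * S := by
    rw [h5, h3]
    rw [show (e:ℂ) * ((e:ℂ) * cC * D) = ((e:ℂ) * (e:ℂ)) * (cC * D) by ring, he, one_mul]
  rw [h1, map_mul, Complex.conj_ofReal] at hDS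
  rw [show (e:ℂ) * (lam * (N:ℂ)) = ((e:ℂ) * lam) * (N:ℂ) by ring] at hDS
  exact mul_right_cancel₀ hNne hDS

-- Parseval-based bound: for any s and finite set of integers,
-- ∑_{n∈S} ‖X(s + n π/L)‖² ≤ 2L ∫ ‖x‖², where X(u) = ∫_{-a}^a e^{iuτ} x(τ) dτ.
lemma besselA (a L : ℝ) (ha : 0 < a) (haL : a ≤ L) (x : ℝ → ℂ) (hx : Continuous x)
    (s : ℝ) (S : Finset ℤ) :
    ∑ n ∈ S, ‖∫ τ in (-a)..a, Complex.exp (Complex.I * (s + n * (Real.pi / L)) * τ) * x τ‖ ^ 2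
      ≤ (2 * L) * ∫ τ in (-a)..a, ‖x τ‖ ^ 2 := by
  have hL : 0 < L := lt_of_lt_of_le ha haL
  set T : ℝ := 2 * L with hT
  have hT0 : 0 < T := by positivity
  haveI hfact : Fact (0 < T) := ⟨hT0⟩
  -- the function on ℝ
  set g : ℝ → ℂ := Set.indicator (Set.Ioc (-a) a) (fun τ => Complex.exp (Complex.I * s * τ) * x τ)
    with hg
  have hgmeas : Measurable g := by
    apply Measurable.indicator _ measurableSet_Ioc
    fun_prop
  -- bound for g
  obtain ⟨C, hC⟩ : ∃ C : ℝ, ∀ τ ∈ Set.Icc (-a) a, ‖x τ‖ ≤ C :=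
    isCompact_Icc.exists_bound_of_continuousOn hx.continuousOn
  have hgbdd : ∀ τ : ℝ, ‖g τ‖ ≤ max C 0 := by
    intro τ
    by_cases hτ : τ ∈ Set.Ioc (-a) a
    · rw [hg, Set.indicator_of_mem hτ]
      rw [norm_mul]
      have h1 : ‖Complex.exp (Complex.I * s * τ)‖ = 1 := by
        rw [Complex.norm_exp]
        have : (Complex.I * s * τ).re = 0 := by simp
        rw [this, Real.exp_zero]
      rw [h1, one_mul]
      exact le_max_of_le_left (hC τ (Set.Ioc_subset_Icc_self hτ))
    · rw [hg, Set.indicator_of_notMem hτ]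
      simp
  -- the lift to the circle
  set f : AddCircle T → ℂ := AddCircle.liftIoc T (-L) g with hf
  have hIocTL : -L + T = L := by rw [hT]; ring
  have hfg : ∀ τ : ℝ, τ ∈ Set.Ioc (-L) L → f ↑τ = g τ := by
    intro τ hτ
    apply AddCircle.liftIoc_coe_apply
    rwa [hIocTL]
  have hfmeas : Measurable f := by
    rw [hf]
    unfold AddCircle.liftIoc
    exact (hgmeas.comp measurable_subtype_coe).comp
      (AddCircle.measurableEquivIoc T (-L)).measurable
  have hfbdd : ∀ z : AddCircle T, ‖f z‖ ≤ max C 0 := by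
    intro z
    rw [hf]
    unfold AddCircle.liftIoc
    exact hgbdd _
  have hmem : MemLp f 2 (@haarAddCircle T hfact) :=
    MemLp.of_bound hfmeas.aestronglyMeasurable (max C 0)
      (Filter.Eventually.of_forall hfbdd)
  set F : Lp ℂ 2 (@haarAddCircle T hfact) := hmem.toLp f with hF
  have hFf : (F : AddCircle T → ℂ) =ᵐ[@haarAddCircle T hfact] f := MemLp.coeFn_toLp hmem
  -- Fourier coefficients
  have hcoeff : ∀ n : ℤ, fourierCoeff (F : AddCircle T → ℂ) n = fourierCoeff f n := by
    intro n
    unfold fourierCoeff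
    apply MeasureTheory.integral_congr_ae
    filter_upwards [hFf] with z hz
    rw [hz]
  -- coefficient computation
  have hcoeff2 : ∀ n : ℤ, fourierCoeff f n = (1 / T : ℂ) *
      ∫ τ in (-a)..a, Complex.exp (Complex.I * (s - n * (Real.pi / L)) * τ) * x τ := by
    intro n
    rw [fourierCoeff_eq_intervalIntegral f n (-L), hIocTL]
    have hTCne : (T : ℂ) ≠ 0 := by
      simp only [ne_eq, Complex.ofReal_eq_zero]
      exact ne_of_gt hT0
    have hLL : -L ≤ L := by linarith
    have hmain : (∫ τ in (-L)..L, @fourier T (-n) ↑τ • f ↑τ)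
        = ∫ τ in (-a)..a, Complex.exp (Complex.I * (s - n * (Real.pi / L)) * τ) * x τ := by
      rw [intervalIntegral.integral_of_le hLL,
        intervalIntegral.integral_of_le (by linarith : -a ≤ a)]
      have hEq : Set.EqOn (fun τ : ℝ => @fourier T (-n) ↑τ • f ↑τ)
          (Set.indicator (Set.Ioc (-a) a)
            (fun τ : ℝ => Complex.exp (Complex.I * (s - n * (Real.pi / L)) * τ) * x τ))
          (Set.Ioc (-L) L) := by
        intro τ hτ
        simp only []
        rw [hfg τ hτ, fourier_coe_apply, smul_eq_mul, hg]
        by_cases hmem : τ ∈ Set.Ioc (-a) a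
        · rw [Set.indicator_of_mem hmem, Set.indicator_of_mem hmem, ← mul_assoc,
            ← Complex.exp_add]
          congr 2
          rw [hT]
          push_cast
          have hLne : (L : ℂ) ≠ 0 := by
            simp only [ne_eq, Complex.ofReal_eq_zero]; exact ne_of_gt hL
          field_simp
          ring
        · rw [Set.indicator_of_notMem hmem, Set.indicator_of_notMem hmem, mul_zero]
      rw [MeasureTheory.setIntegral_congr_fun measurableSet_Ioc hEq,
        MeasureTheory.setIntegral_indicator measurableSet_Ioc,
        Set.inter_eq_self_of_subset_right
          (Set.Ioc_subset_Ioc (by linarith) (by linarith))]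
    rw [hmain]
    rw [Complex.real_smul]
    push_cast
    ring
  -- summability
  have hsummable : Summable (fun n : ℤ => ‖fourierCoeff (F : AddCircle T → ℂ) n‖ ^ 2) := by
    have hmem2 := lp.memℓp (fourierBasis.repr F)
    have := (memℓp_gen_iff (p := 2) (by norm_num) (f := (fourierBasis.repr F : ℤ → ℂ))).mp hmem2
    have h2 : ((2 : ℝ≥0∞)).toReal = (2 : ℝ) := by simp
    rw [h2] at this
    apply Summable.congr this
    intro n
    rw [fourierBasis_repr]
    rw [← Real.rpow_natCast ‖fourierCoeff (F : AddCircle T → ℂ) n‖ 2]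
    norm_num
  -- Parseval
  have hpars := tsum_sq_fourierCoeff F
  -- the RHS integral
  have hNval : (∫ z : AddCircle T, ‖(F : AddCircle T → ℂ) z‖ ^ 2 ∂(@haarAddCircle T hfact))
      = (1 / T) * ∫ τ in (-a)..a, ‖x τ‖ ^ 2 := by
    have e1 : (∫ z : AddCircle T, ‖(F : AddCircle T → ℂ) z‖ ^ 2 ∂(@haarAddCircle T hfact))
        = ∫ z : AddCircle T, ‖f z‖ ^ 2 ∂(@haarAddCircle T hfact) := by
      apply MeasureTheory.integral_congr_ae
      filter_upwards [hFf] with z hz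
      rw [hz]
    have e2 : (∫ z : AddCircle T, ‖f z‖ ^ 2 ∂(volume : Measure (AddCircle T)))
        = T * ∫ z : AddCircle T, ‖f z‖ ^ 2 ∂(@haarAddCircle T hfact) := by
      rw [volume_eq_smul_haarAddCircle, MeasureTheory.integral_smul_measure,
        ENNReal.toReal_ofReal hT0.le, smul_eq_mul]
    have e3 : (∫ z : AddCircle T, ‖f z‖ ^ 2 ∂(volume : Measure (AddCircle T)))
        = ∫ τ in (-a)..a, ‖x τ‖ ^ 2 := by
      rw [← AddCircle.integral_preimage T (-L) (fun z => ‖f z‖ ^ 2), hIocTL]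
      have hEq : Set.EqOn (fun τ : ℝ => ‖f ↑τ‖ ^ 2)
          (Set.indicator (Set.Ioc (-a) a) (fun τ : ℝ => ‖x τ‖ ^ 2)) (Set.Ioc (-L) L) := by
        intro τ hτ
        simp only []
        rw [hfg τ hτ, hg]
        by_cases hmem : τ ∈ Set.Ioc (-a) a
        · rw [Set.indicator_of_mem hmem, Set.indicator_of_mem hmem, norm_mul]
          have h1 : ‖Complex.exp (Complex.I * s * τ)‖ = 1 := by
            rw [Complex.norm_exp]
            have : (Complex.I * s * τ).re = 0 := by simp
            rw [this, Real.exp_zero]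
          rw [h1, one_mul]
        · rw [Set.indicator_of_notMem hmem, Set.indicator_of_notMem hmem, norm_zero]
          norm_num
      rw [MeasureTheory.setIntegral_congr_fun measurableSet_Ioc hEq,
        MeasureTheory.setIntegral_indicator measurableSet_Ioc,
        Set.inter_eq_self_of_subset_right
          (Set.Ioc_subset_Ioc (by linarith) (by linarith)),
        intervalIntegral.integral_of_le (by linarith : -a ≤ a)]
    rw [e1, ← e3, e2]
    field_simp
  -- rewrite each summand
  have hTCne : (T : ℂ) ≠ 0 := by
    simp only [ne_eq, Complex.ofReal_eq_zero]
    exact ne_of_gt hT0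
  have hXeq : ∀ n : ℤ, (∫ τ in (-a)..a,
      Complex.exp (Complex.I * (s + n * (Real.pi / L)) * τ) * x τ)
      = (T : ℂ) * fourierCoeff f (-n) := by
    intro n
    rw [hcoeff2 (-n)]
    rw [← mul_assoc, mul_one_div, div_self hTCne, one_mul]
    apply intervalIntegral.integral_congr
    intro τ _
    simp only []
    congr 2
    push_cast
    ring
  calc ∑ n ∈ S, ‖∫ τ in (-a)..a,
        Complex.exp (Complex.I * (s + n * (Real.pi / L)) * τ) * x τ‖ ^ 2
      = ∑ n ∈ S, T ^ 2 * ‖fourierCoeff (F : AddCircle T → ℂ) (-n)‖ ^ 2 := by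
        apply Finset.sum_congr rfl
        intro n _
        rw [hXeq n, hcoeff, norm_mul, mul_pow, Complex.norm_real, Real.norm_of_nonneg hT0.le]
    _ = T ^ 2 * ∑ m ∈ S.image (fun n => -n), ‖fourierCoeff (F : AddCircle T → ℂ) m‖ ^ 2 := by
        rw [Finset.mul_sum, Finset.sum_image (by intro u _ v _ h; exact neg_injective h)]
    _ ≤ T ^ 2 * ∑' m : ℤ, ‖fourierCoeff (F : AddCircle T → ℂ) m‖ ^ 2 := by
        apply mul_le_mul_of_nonneg_left _ (by positivity)
        exact Summable.sum_le_tsum _ (fun m _ => by positivity) hsummable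
    _ = T ^ 2 * ((1 / T) * ∫ τ in (-a)..a, ‖x τ‖ ^ 2) := by rw [hpars, hNval]
    _ = (2 * L) * ∫ τ in (-a)..a, ‖x τ‖ ^ 2 := by
        rw [← hT]
        field_simp

set_option maxHeartbeats 1000000 in
lemma truncFourier_sq_int_le (a : ℝ) (ha : 0 < a) (x : ℝ → ℂ) (hx : Continuous x) :
    ∫ t in (-a)..a, ‖truncFourier a x t‖ ^ 2 ≤ ∫ τ in (-a)..a, ‖x τ‖ ^ 2 := by
  have hπ : 0 < Real.pi := Real.pi_pos
  set M : ℕ := ⌈a ^ 2 / Real.pi⌉₊ + 1 with hMdef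
  have hM : 0 < (M : ℝ) := by positivity
  set L : ℝ := Real.pi * M / a with hL
  have hLpos : 0 < L := by positivity
  have haL : a ≤ L := by
    rw [hL, le_div_iff₀ ha]
    have h1 : a ^ 2 / Real.pi ≤ (M : ℝ) := by
      rw [hMdef]
      push_cast
      calc a ^ 2 / Real.pi ≤ ⌈a ^ 2 / Real.pi⌉₊ := Nat.le_ceil _
        _ ≤ ⌈a ^ 2 / Real.pi⌉₊ + 1 := by linarith
    calc a * a = a ^ 2 := by ring
      _ ≤ Real.pi * M := by
        rw [← div_le_iff₀' hπ] at *
        linarith [h1]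
  set h : ℝ := a / M with hh
  have hpos : 0 < h := by positivity
  have hπL : Real.pi / L = h := by
    rw [hL, hh]
    field_simp
  have hhL1 : h * (L / Real.pi) = 1 := by
    rw [← hπL]
    field_simp
  have h2M : (2 * (M:ℝ)) * h = 2 * a := by
    rw [hh]
    field_simp
  clear_value M L h
  set G : ℝ → ℝ := fun t => ‖truncFourier a x t‖ ^ 2 with hG
  have hGc : Continuous G := (truncFourier_continuous a x hx).norm.pow 2
  set pts : ℕ → ℝ := fun k => -a + k * h with hpts
  have hpts0 : pts 0 = -a := by simp [hpts]
  have hpts2M : pts (2 * M) = a := by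
    rw [hpts]
    push_cast
    push_cast at h2M
    nlinarith [h2M]
  set N : ℝ := ∫ τ in (-a)..a, ‖x τ‖ ^ 2 with hN
  -- step 1 : decompose into 2M pieces
  have step1 : ∫ t in (-a)..a, G t = ∑ k ∈ Finset.range (2 * M),
      ∫ t in (pts k)..(pts (k + 1)), G t := by
    rw [← hpts0, ← hpts2M]
    exact (intervalIntegral.sum_integral_adjacent_intervals
      (fun k _ => hGc.intervalIntegrable _ _)).symm
  -- step 2 : shift each piece
  have step2 : ∀ k : ℕ, (∫ t in (pts k)..(pts (k + 1)), G t)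
      = ∫ s in (0:ℝ)..h, G (s + pts k) := by
    intro k
    rw [intervalIntegral.integral_comp_add_right G (pts k)]
    congr 1
    · ring
    · rw [hpts]; push_cast; ring
  -- step 3 : swap sum and integral
  have step3 : ∑ k ∈ Finset.range (2 * M), (∫ s in (0:ℝ)..h, G (s + pts k))
      = ∫ s in (0:ℝ)..h, ∑ k ∈ Finset.range (2 * M), G (s + pts k) := by
    rw [intervalIntegral.integral_finset_sum]
    intro k _
    exact (hGc.comp (continuous_id.add continuous_const)).intervalIntegrable _ _
  -- pointwise bound via Bessel
  set Y : ℝ → ℂ := fun u => ∫ τ in (-a)..a, Complex.exp (Complex.I * u * τ) * x τ with hY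
  have key : ∀ s : ℝ, ∑ k ∈ Finset.range (2 * M), G (s + pts k) ≤ (L / Real.pi) * N := by
    intro s
    have hs2π : Real.sqrt (2 * Real.pi) ^ 2 = 2 * Real.pi :=
      Real.sq_sqrt (by positivity)
    have hGval : ∀ t : ℝ, G t = (1 / (2 * Real.pi)) * ‖Y t‖ ^ 2 := by
      intro t
      rw [hG]
      show ‖(1 / (Real.sqrt (2 * Real.pi) : ℂ)) * Y t‖ ^ 2 = _
      rw [norm_mul, mul_pow]
      congr 1
      rw [norm_div, norm_one, Complex.norm_real, Real.norm_of_nonneg (Real.sqrt_nonneg _)]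
      rw [div_pow, one_pow, hs2π]
    have hbessel := besselA a L ha haL x hx (s - a)
      ((Finset.range (2 * M)).image (fun k : ℕ => (k : ℤ)))
    have hbY : ∀ n : ℤ, (∫ τ in (-a)..a, Complex.exp (Complex.I *
        (((s - a : ℝ) : ℂ) + (n : ℂ) * ((Real.pi : ℂ) / (L : ℂ))) * (τ : ℂ)) * x τ)
        = Y (s - a + n * (Real.pi / L)) := by
      intro n
      apply intervalIntegral.integral_congr
      intro τ _
      rw [show (((s - a : ℝ) : ℂ) + (n : ℂ) * ((Real.pi : ℂ) / (L : ℂ)))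
        = ((s - a + n * (Real.pi / L) : ℝ) : ℂ) by push_cast; ring]
    simp only [hbY] at hbessel
    rw [Finset.sum_image (by intro u _ v _ huv; exact Nat.cast_injective huv)] at hbessel
    have hnice : ∀ k : ℕ, s + pts k = s - a + ((k : ℤ) : ℝ) * (Real.pi / L) := by
      intro k
      rw [hpts, ← hπL]
      push_cast
      ring
    calc ∑ k ∈ Finset.range (2 * M), G (s + pts k)
        = (1 / (2 * Real.pi)) * ∑ k ∈ Finset.range (2 * M),
          ‖Y (s - a + ((k : ℤ) : ℝ) * (Real.pi / L))‖ ^ 2 := by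
          rw [Finset.mul_sum]
          apply Finset.sum_congr rfl
          intro k _
          rw [hGval (s + pts k), hnice k]
      _ ≤ (1 / (2 * Real.pi)) * ((2 * L) * N) := by
          apply mul_le_mul_of_nonneg_left _ (by positivity)
          exact hbessel
      _ = (L / Real.pi) * N := by
          rw [show (1 / (2 * Real.pi)) * ((2 * L) * N) = (2 * L) / (2 * Real.pi) * N by ring]
          congr 1
          rw [mul_div_mul_left _ _ (two_ne_zero)]
  -- assemble
  have hNnn : 0 ≤ N := by
    rw [hN, intervalIntegral.integral_of_le (by linarith : -a ≤ a)]
    positivity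
  calc ∫ t in (-a)..a, G t
      = ∫ s in (0:ℝ)..h, ∑ k ∈ Finset.range (2 * M), G (s + pts k) := by
        rw [step1]
        rw [Finset.sum_congr rfl fun k _ => step2 k]
        exact step3
    _ ≤ ∫ s in (0:ℝ)..h, (L / Real.pi) * N := by
        have hfint : IntervalIntegrable
            (fun s => ∑ k ∈ Finset.range (2 * M), G (s + pts k)) volume 0 h := by
          apply Continuous.intervalIntegrable
          apply continuous_finset_sum
          intro k _
          exact hGc.comp (continuous_id.add continuous_const)
        have hgint : IntervalIntegrable (fun _ : ℝ => (L / Real.pi) * N) volume 0 h :=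
          intervalIntegrable_const
        exact intervalIntegral.integral_mono_on (μ := volume) (a := 0) (b := h)
          (f := fun s => ∑ k ∈ Finset.range (2 * M), G (s + pts k))
          (g := fun _ => (L / Real.pi) * N) hpos.le hfint hgint (fun s _ => key s)
    _ = h * ((L / Real.pi) * N) := by
        rw [intervalIntegral.integral_const, smul_eq_mul, sub_zero]
    _ = N := by
        rw [← mul_assoc, hhL1, one_mul]

-- |λ| ≤ 1 for any eigenfunction
lemma eigen_abs_le_one (a : ℝ) (ha : 0 < a) (x : ℝ → ℂ) (lam : ℂ) (hx : Continuous x)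
    (hx0 : ∃ t ∈ Set.Icc (-a) a, x t ≠ 0)
    (heig : ∀ t ∈ Set.Icc (-a) a, truncFourier a x t = lam * x t) :
    ‖lam‖ ≤ 1 := by
  have hle : -a ≤ a := by linarith
  set N : ℝ := ∫ t in (-a)..a, ‖x t‖ ^ 2 with hN
  have hNpos : 0 < N := N_pos a ha x hx hx0
  have hEq : (∫ t in (-a)..a, ‖truncFourier a x t‖ ^ 2) = ‖lam‖ ^ 2 * N := by
    have h1 : (∫ t in (-a)..a, ‖truncFourier a x t‖ ^ 2)
        = ∫ t in (-a)..a, ‖lam‖ ^ 2 * ‖x t‖ ^ 2 := by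
      apply intervalIntegral.integral_congr
      intro t ht
      rw [Set.uIcc_of_le hle] at ht
      simp only []
      rw [heig t ht, norm_mul, mul_pow]
    rw [h1, intervalIntegral.integral_const_mul]
  have hb := truncFourier_sq_int_le a ha x hx
  rw [hEq] at hb
  have h2 : ‖lam‖ ^ 2 ≤ 1 := by
    by_contra hcon
    push_neg at hcon
    nlinarith
  nlinarith [norm_nonneg lam]

-- parity commutation
lemma truncFourier_comp_neg (a : ℝ) (x : ℝ → ℂ) (t : ℝ) :
    truncFourier a (fun τ => x (-τ)) t = truncFourier a x (-t) := by
  unfold truncFourier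
  congr 1
  set f : ℝ → ℂ := fun u => Complex.exp (Complex.I * (-t) * u) * x u with hf
  have key : (∫ τ in (-a)..a, f (-τ)) = ∫ u in (-a)..a, f u := by
    have := intervalIntegral.integral_comp_neg (a := -a) (b := a) (f := f)
    simpa using this
  rw [show ((-t : ℝ) : ℂ) = -(t:ℂ) by push_cast; ring]
  rw [← key]
  apply intervalIntegral.integral_congr
  intro τ _
  simp only [hf, neg_neg]
  congr 2
  push_cast
  ring

-- linearity helper: truncFourier of a linear combination (u + e•v)/2 type expressions
lemma truncFourier_eig_part (a : ℝ) (ha : 0 < a) (x : ℝ → ℂ) (lam : ℂ) (hx : Continuous x)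
    (heig : ∀ t ∈ Set.Icc (-a) a, truncFourier a x t = lam * x t) (e : ℂ) :
    ∀ t ∈ Set.Icc (-a) a,
      truncFourier a (fun τ => (x τ + e * x (-τ)) / 2) t
        = lam * ((x t + e * x (-t)) / 2) := by
  intro t ht
  have hmt : -t ∈ Set.Icc (-a) a := by
    simp only [Set.mem_Icc] at ht ⊢
    constructor <;> linarith [ht.1, ht.2]
  have hint1 : IntervalIntegrable (fun τ : ℝ => Complex.exp (Complex.I * t * τ) * x τ)
      volume (-a) a := by
    apply Continuous.intervalIntegrable; fun_prop
  have hint2' : IntervalIntegrable (fun τ : ℝ => Complex.exp (Complex.I * t * τ) * x (-τ))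
      volume (-a) a := by
    apply Continuous.intervalIntegrable
    exact Continuous.mul (by fun_prop) (hx.comp continuous_neg)
  have hsplit : truncFourier a (fun τ => (x τ + e * x (-τ)) / 2) t
      = (truncFourier a x t + e * truncFourier a (fun τ => x (-τ)) t) / 2 := by
    unfold truncFourier
    have hptw : ∀ τ : ℝ, Complex.exp (Complex.I * t * τ) * ((x τ + e * x (-τ)) / 2)
        = (1/2 : ℂ) * (Complex.exp (Complex.I * t * τ) * x τ)
          + (e/2) * (Complex.exp (Complex.I * t * τ) * x (-τ)) := by
      intro τ; ring
    simp only [hptw]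
    rw [intervalIntegral.integral_add (hint1.const_mul _) ((hint2').const_mul _),
      intervalIntegral.integral_const_mul, intervalIntegral.integral_const_mul]
    ring
  rw [hsplit, truncFourier_comp_neg, heig t ht, heig (-t) hmt]
  ring

/-- Eigenvalues of `F_{[-a,a]}` with even eigenfunctions are real and lie in `[−1,1]`;
eigenvalues with odd eigenfunctions are purely imaginary and lie in `[−i,i]`;
consequently every eigenvalue lies in the cross `[−1,1] ∪ [−i,i] ⊂ ℂ`. -/
theorem truncFourier_eigenvalue_cross (a : ℝ) (ha : 0 < a) (x : ℝ → ℂ) (lam : ℂ)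
    (hx : Continuous x)
    (hx0 : ∃ t ∈ Set.Icc (-a) a, x t ≠ 0)
    (heig : ∀ t ∈ Set.Icc (-a) a, truncFourier a x t = lam * x t) :
    ((∀ t, x (-t) = x t) → lam.im = 0 ∧ -1 ≤ lam.re ∧ lam.re ≤ 1) ∧
    ((∀ t, x (-t) = -x t) → lam.re = 0 ∧ -1 ≤ lam.im ∧ lam.im ≤ 1) ∧
    ((lam.im = 0 ∨ lam.re = 0) ∧ ‖lam‖ ≤ 1) := by
  have habs := eigen_abs_le_one a ha x lam hx hx0 heig
  have hre_bound : -1 ≤ lam.re ∧ lam.re ≤ 1 := by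
    have h1 : |lam.re| ≤ ‖lam‖ := Complex.abs_re_le_norm lam
    have := abs_le.mp (le_trans h1 habs)
    exact this
  have him_bound : -1 ≤ lam.im ∧ lam.im ≤ 1 := by
    have h1 : |lam.im| ≤ ‖lam‖ := Complex.abs_im_le_norm lam
    have := abs_le.mp (le_trans h1 habs)
    exact this
  -- generic even conclusion
  have heven : ∀ y : ℝ → ℂ, Continuous y → (∃ t ∈ Set.Icc (-a) a, y t ≠ 0) →
      (∀ t ∈ Set.Icc (-a) a, truncFourier a y t = lam * y t) →
      (∀ t, y (-t) = y t) → lam.im = 0 := by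
    intro y hy hy0 hyeig hsym
    have := eigen_conj a ha y lam hy hy0 hyeig 1 (by norm_num)
      (by intro t; rw [hsym]; norm_num)
    rw [Complex.ofReal_one, one_mul] at this
    exact Complex.conj_eq_iff_im.mp this
  have hodd : ∀ y : ℝ → ℂ, Continuous y → (∃ t ∈ Set.Icc (-a) a, y t ≠ 0) →
      (∀ t ∈ Set.Icc (-a) a, truncFourier a y t = lam * y t) →
      (∀ t, y (-t) = -y t) → lam.re = 0 := by
    intro y hy hy0 hyeig hsym
    have hc := eigen_conj a ha y lam hy hy0 hyeig (-1) (by push_cast; ring)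
      (by intro t; rw [hsym]; push_cast; ring)
    have hre := congrArg Complex.re hc
    simp only [Complex.conj_re, Complex.ofReal_neg, Complex.ofReal_one] at hre
    have : ((-1 : ℂ) * lam).re = -lam.re := by simp
    rw [this] at hre
    linarith
  refine ⟨fun hsym => ⟨heven x hx hx0 heig hsym, hre_bound⟩,
    fun hsym => ⟨hodd x hx hx0 heig hsym, him_bound⟩, ?_, habs⟩
  -- decomposition into even and odd parts
  obtain ⟨t0, ht0, hxt0⟩ := hx0
  by_cases hcase : ∃ t ∈ Set.Icc (-a) a, x t + x (-t) ≠ 0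
  · left
    obtain ⟨t1, ht1, hxe1⟩ := hcase
    refine heven (fun τ => (x τ + 1 * x (-τ)) / 2) (by fun_prop) ⟨t1, ht1, ?_⟩
      (truncFourier_eig_part a ha x lam hx heig 1) ?_
    · simp only [one_mul]
      intro hcon
      apply hxe1
      field_simp at hcon
      exact hcon.trans (mul_zero 2)
    · intro t
      simp only [one_mul, neg_neg]
      ring
  · right
    push_neg at hcase
    have hzero : x t0 + x (-t0) = 0 := hcase t0 ht0
    refine hodd (fun τ => (x τ + (-1) * x (-τ)) / 2) (by fun_prop) ⟨t0, ht0, ?_⟩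
      (truncFourier_eig_part a ha x lam hx heig (-1)) ?_
    · simp only [neg_one_mul]
      intro hcon
      apply hxt0
      have hx2 : x (-t0) = -x t0 := by linear_combination hzero
      rw [hx2] at hcon
      field_simp at hcon
      exact (mul_eq_zero.mp (hcon.trans (mul_zero 2))).resolve_right (by norm_num)
    · intro t
      simp only [neg_one_mul, neg_neg]
      ring
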